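/- Let f be the Fibonacci sequence with f 0 = 1, f 1 = 1, f (n+2) = f (n+1) + f n. Consider the substitution system on the alphabet {B, O, Y, G} with rules B → BO, O → BYO, Y → BYG, G → BYG. Starting from the single letter G at level 0, the total number of letters at level n equals f (2n+1). -/

import Mathlib

inductive Letter | B | O | Y | G
deriving DecidableEq

def sub : Letter → List Letter
  | .B => [.B, .O]
  | .O => [.B, .Y, .O]
  | .Y => [.B, .Y, .G]
  | .G => [.B, .Y, .G]

/-- Level `n` of the substitution system, starting from the single letter `G`. -/
def level : ℕ → List Letter
  | 0 => [.G]
  | n + 1 => (level n).flatMap sub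

/-- Fibonacci sequence with `f 0 = f 1 = 1`. -/
def f : ℕ → ℕ
  | 0 => 1
  | 1 => 1
  | n + 2 => f (n + 1) + f n

lemma len_bind (l : List Letter) :
    (l.flatMap sub).length + l.count Letter.B = 3 * l.length := by
  induction l with
  | nil => simp
  | cons a t ih =>
    cases a <;> simp [List.count_cons, sub] at * <;> omega

lemma countB_bind (l : List Letter) :
    (l.flatMap sub).count Letter.B = l.length := by
  induction l with
  | nil => simp
  | cons a t ih =>
    cases a <;> simp [sub, List.count_cons, List.count_append, ih]

lemma aux : ∀ n : ℕ, (level n).length = f (2 * n + 1) ∧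
    (level (n + 1)).length = f (2 * n + 3) := by
  intro n
  induction n with
  | zero => constructor <;> simp [level, f, sub]
  | succ k ih =>
    obtain ⟨h1, h2⟩ := ih
    refine ⟨by simpa [show 2 * (k + 1) + 1 = 2 * k + 3 by ring] using h2, ?_⟩
    have e1 := len_bind (level (k + 1))
    have e2 := countB_bind (level k)
    have hl : (level k).flatMap sub = level (k + 1) := rfl
    have hl2 : (level (k + 1)).flatMap sub = level (k + 2) := rfl
    have hf : f (2 * (k + 1) + 3) = 3 * f (2 * k + 3) - f (2 * k + 1) := by
      have h3 : f (2 * k + 5) = f (2 * k + 4) + f (2 * k + 3) := rfl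
      have h4 : f (2 * k + 4) = f (2 * k + 3) + f (2 * k + 2) := rfl
      have h5 : f (2 * k + 3) = f (2 * k + 2) + f (2 * k + 1) := rfl
      have : 2 * (k + 1) + 3 = 2 * k + 5 := by ring
      rw [this]
      omega
    rw [hl] at e2
    rw [hl2] at e1
    rw [show k + 1 + 1 = k + 2 from rfl, hf]
    omega

theorem levels_count_fib : ∀ n : ℕ, (level n).length = f (2 * n + 1) := by
  intro n
  exact (aux n).1
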